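/- Let R be a commutative domain of characteristic zero, K a field, f : R → K a ring homomorphism, and N a nilpotent n × n matrix over R. Suppose that for every j ≥ 1, the rank of f(N)^j over K equals the rank of N^j over Frac(R). Then for any field L and any ring homomorphism g : R → L whose kernel is contained in the kernel of f (i.e., f factors through g up to a homomorphism on images), the rank of g(N)^j over L also equals the rank of N^j over Frac(R), for every j ≥ 1. -/

import Mathlib

open Matrix Module Submodule

/-- From a matrix of rank `r` over a field one can extract `r` linearly independent rows. -/
lemma aux_exists_indep_rows {F : Type} [Field F] {m k r : ℕ}
    (A : Matrix (Fin m) (Fin k) F) (hr : A.rank = r) :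
    ∃ row : Fin r → Fin m, LinearIndependent F (fun i => A (row i)) := by
  classical
  obtain ⟨b, hbsub, hbspan, hbind⟩ := exists_linearIndependent F (Set.range A)
  have hbfin : b.Finite := (Set.finite_range A).subset hbsub
  haveI : Fintype b := hbfin.fintype
  have hcard : b.toFinset.card = r := by
    have h1 : finrank F (span F b) = b.toFinset.card := finrank_span_set_eq_card hbind
    have h2 : finrank F (span F (Set.range A)) = r := by
      have h3 := Matrix.rank_eq_finrank_span_row A
      rw [hr] at h3
      exact h3.symm
    rw [hbspan, h2] at h1
    omega
  have hb' : Fintype.card b = r := by rwa [Set.toFinset_card] at hcard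
  let e : Fin r ≃ b := (Fintype.equivFinOfCardEq hb').symm
  have hchoice : ∀ x : b, ∃ i : Fin m, A i = (x : Fin k → F) := fun x => hbsub x.2
  choose idx hidx using hchoice
  refine ⟨fun i => idx (e i), ?_⟩
  have : (fun i => A (idx (e i))) = (fun x : b => (x : Fin k → F)) ∘ e := by
    funext i; simp [hidx]
  rw [this]
  exact hbind.comp e e.injective

/-- A matrix of rank `r` over a field has an invertible `r × r` submatrix. -/
lemma aux_exists_isUnit_submatrix {F : Type} [Field F] {m r : ℕ}
    (A : Matrix (Fin m) (Fin m) F) (hr : A.rank = r) :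
    ∃ (row col : Fin r → Fin m), IsUnit (A.submatrix row col) := by
  classical
  obtain ⟨row, hrow⟩ := aux_exists_indep_rows A hr
  set B : Matrix (Fin r) (Fin m) F := A.submatrix row id with hB
  have hrowB : LinearIndependent F (fun i => B i) := hrow
  have hrankB : B.rank = r := by
    have := hrowB.rank_matrix
    simp at this
    exact this
  have hrankBT : Bᵀ.rank = r := by rw [Matrix.rank_transpose]; exact hrankB
  obtain ⟨col, hcol⟩ := aux_exists_indep_rows Bᵀ hrankBT
  refine ⟨row, col, ?_⟩
  have : A.submatrix row col = B.submatrix id col := by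
    simp [hB, Matrix.submatrix_submatrix]
  rw [this]
  rw [← Matrix.linearIndependent_cols_iff_isUnit]
  have heq : (fun i => (B.submatrix id col)ᵀ i) = fun i => Bᵀ (col i) := by
    funext i; rfl
  show LinearIndependent F (fun i => (B.submatrix id col)ᵀ i)
  rw [heq]
  exact hcol

/-- An invertible `r × r` submatrix forces the rank to be at least `r`. -/
lemma aux_rank_ge_of_isUnit_submatrix {F : Type} [Field F] {m r : ℕ}
    (A : Matrix (Fin m) (Fin m) F) (row col : Fin r → Fin m)
    (hu : IsUnit (A.submatrix row col)) : r ≤ A.rank := by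
  classical
  have h1 : A.submatrix row id = ((1 : Matrix (Fin m) (Fin m) F).submatrix row (Equiv.refl (Fin m))) * A := by
    rw [Matrix.one_submatrix_mul]
    rfl
  have h2 : A.submatrix row col = (A.submatrix row id) * ((1 : Matrix (Fin m) (Fin m) F).submatrix (Equiv.refl (Fin m)) col) := by
    rw [Matrix.mul_submatrix_one]
    simp [Matrix.submatrix_submatrix]
  have hle1 : (A.submatrix row col).rank ≤ (A.submatrix row id).rank := by
    rw [h2]; exact Matrix.rank_mul_le_left _ _
  have hle2 : (A.submatrix row id).rank ≤ A.rank := by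
    rw [h1]; exact Matrix.rank_mul_le_right _ _
  have hru : (A.submatrix row col).rank = r := by
    rw [Matrix.rank_of_isUnit _ hu]; simp
  omega

/-- Rank semicontinuity: if `ker e ≤ ker h` (entrywise), the rank of `M.map h`
is at most the rank of `M.map e`. -/
lemma aux_rank_map_le {D K L : Type} [CommRing D] [Field K] [Field L]
    (h : D →+* K) (e : D →+* L) (hke : ∀ d : D, e d = 0 → h d = 0)
    {m : ℕ} (M : Matrix (Fin m) (Fin m) D) :
    (M.map h).rank ≤ (M.map e).rank := by
  classical
  obtain ⟨row, col, hu⟩ := aux_exists_isUnit_submatrix (M.map h) rfl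
  have hu2 : IsUnit (h (M.submatrix row col).det) := by
    rw [RingHom.map_det, RingHom.mapMatrix_apply, ← Matrix.isUnit_iff_isUnit_det]
    exact hu
  have hne : h (M.submatrix row col).det ≠ 0 := hu2.ne_zero
  have hne' : e (M.submatrix row col).det ≠ 0 := fun h0 => hne (hke _ h0)
  have hu' : IsUnit ((M.map e).submatrix row col) := by
    rw [Matrix.isUnit_iff_isUnit_det]
    have hdet : ((M.map e).submatrix row col).det = e (M.submatrix row col).det := by
      rw [RingHom.map_det, RingHom.mapMatrix_apply]; rfl
    rw [hdet]
    exact isUnit_iff_ne_zero.mpr hne'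
  exact aux_rank_ge_of_isUnit_submatrix _ row col hu'

lemma aux_map_pow {D E : Type} [CommRing D] [CommRing E] (φ : D →+* E) {m : ℕ}
    (M : Matrix (Fin m) (Fin m) D) (j : ℕ) : (M.map φ) ^ j = (M ^ j).map φ := by
  have := map_pow φ.mapMatrix M j
  simpa [RingHom.mapMatrix_apply] using this.symm

/-- let `N` be a nilpotent matrix over a characteristic-zero domain `R`.
If the ranks of all powers of `N` are preserved by the specialization `f : R → K`, then
they are preserved by every specialization `g : R →+* L` with `ker g ⊆ ker f`. -/
theorem rank_pow_constant_of_factoring_specialization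
    {R K L : Type} [CommRing R] [IsDomain R] [CharZero R] [Field K] [Field L]
    (f : R →+* K) (g : R →+* L) (hker : RingHom.ker g ≤ RingHom.ker f)
    {n : ℕ} (N : Matrix (Fin n) (Fin n) R) (hN : IsNilpotent N)
    (hf : ∀ j : ℕ, 1 ≤ j →
      ((N.map f) ^ j).rank = ((N.map (algebraMap R (FractionRing R))) ^ j).rank) :
    ∀ j : ℕ, 1 ≤ j →
      ((N.map g) ^ j).rank = ((N.map (algebraMap R (FractionRing R))) ^ j).rank := by
  intro j hj
  have hfj := hf j hj
  rw [aux_map_pow f N j, aux_map_pow g N j,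
    aux_map_pow (algebraMap R (FractionRing R)) N j] at *
  -- lower bound: rank over f ≤ rank over g, since ker g ≤ ker f
  have h1 : ((N ^ j).map f).rank ≤ ((N ^ j).map g).rank :=
    aux_rank_map_le f g (fun d hd => hker (by simpa [RingHom.mem_ker] using hd)) _
  -- upper bound: rank over g ≤ generic rank, since the algebra map is injective
  have h2 : ((N ^ j).map g).rank ≤ ((N ^ j).map (algebraMap R (FractionRing R))).rank :=
    aux_rank_map_le g (algebraMap R (FractionRing R))
      (fun d hd => by
        have : d = 0 := IsFractionRing.injective R (FractionRing R) (by simpa using hd)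
        simp [this]) _
  omega
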